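/- Suppose b(+)/a(+) ≤ b(−)/a(−) and b(+)/a(+) < N, and let S_min be a real number with 0 < S_min < b(+)/(2a(+)) such that −N·a(σ)·S_min + c(σ)·(b(+)/(2a(+)) − S_min) > 0 for each σ ∈ E. Define the quadrangle Q = {(s, i) ∈ ℝ² : s ≥ S_min, i ≥ 0, s + i ≤ N, i ≤ N − b(+)/(2a(+))}. Then: (i) Q is forward invariant, i.e. for every switching signal ξ, every solution (S, I) of the switched SIRS system, and every t₀ ≥ 0 with (S(t₀), I(t₀)) ∈ Q, one has (S(t), I(t)) ∈ Q for all t ≥ t₀; (ii) Q absorbs all positive solutions: for every switching signal ξ and every solution with S(0) > 0, I(0) > 0, S(0) + I(0) ≤ N, there exists T ≥ 0 such that (S(t), I(t)) ∈ Q for all t ≥ T. -/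

import Mathlib

open Filter MeasureTheory

/-- The state space of environments: `true` is `+`, `false` is `−`. -/
abbrev Env := Bool

/-- `ξ` is locally constant (as a function on `[0,∞)`) at the point `t`. -/
def ContPt (ξ : ℝ → Env) (t : ℝ) : Prop :=
  ∀ᶠ s in nhdsWithin t (Set.Ici (0:ℝ)), ξ s = ξ t

/-- A switching signal: right-continuous, piecewise constant,
with locally finite set of discontinuities in `[0,∞)`. -/
def IsSwitchingSignal (ξ : ℝ → Env) : Prop :=
  (∀ t : ℝ, 0 ≤ t → ∀ᶠ s in nhdsWithin t (Set.Ici t), ξ s = ξ t) ∧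
  (∀ T : ℝ, {t : ℝ | 0 ≤ t ∧ t ≤ T ∧ ¬ ContPt ξ t}.Finite)

/-- `(S, I)` is a solution of the switched SIRS system driven by `ξ`:
continuous on `[0,∞)` and satisfying the SIRS equations at every
`t ≥ 0` which is not a discontinuity of `ξ`. -/
def IsSIRSSolution (N : ℝ) (a b c : Env → ℝ) (ξ : ℝ → Env) (S I : ℝ → ℝ) : Prop :=
  ContinuousOn S (Set.Ici (0:ℝ)) ∧ ContinuousOn I (Set.Ici (0:ℝ)) ∧
  ∀ t : ℝ, 0 ≤ t → ContPt ξ t →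
    HasDerivWithinAt S (-(a (ξ t) * S t * I t) + c (ξ t) * (N - S t - I t)) (Set.Ici (0:ℝ)) t ∧
    HasDerivWithinAt I (a (ξ t) * S t * I t - b (ξ t) * I t) (Set.Ici (0:ℝ)) t

/-- `ξ` has mean growth rate `lam`:
`lim_{t→∞} (1/t) ∫₀ᵗ (a(ξ(s))·N − b(ξ(s))) ds = lam`. -/
def HasMeanGrowthRate (N : ℝ) (a b : Env → ℝ) (ξ : ℝ → Env) (lam : ℝ) : Prop :=
  Tendsto (fun t : ℝ => (1 / t) * ∫ s in (0:ℝ)..t, (a (ξ s) * N - b (ξ s)))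
    atTop (nhds lam)

/-- Differential inequality on an interval with derivatives available on the open interior:
if `f' t ≤ K f t` whenever `f t ≥ 0`, and `f p ≤ 0`, then `f ≤ 0` on `[p,q]`. -/
lemma sirsW0 {f f' : ℝ → ℝ} {p q K : ℝ} (hK : 0 ≤ K)
    (hf : ContinuousOn f (Set.Icc p q))
    (hd : ∀ t, t ∈ Set.Ioo p q → HasDerivWithinAt f (f' t) (Set.Ici t) t)
    (hbnd : ∀ t, t ∈ Set.Ioo p q → 0 ≤ f t → f' t ≤ K * f t)
    (hp : f p ≤ 0) : ∀ t ∈ Set.Icc p q, f t ≤ 0 := by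
  intro t ht
  rcases eq_or_lt_of_le ht.1 with h | hpt
  · exact h ▸ hp
  by_contra hpos
  push_neg at hpos
  set E : ℝ := Real.exp ((K + 1) * (t - p)) with hE
  have hE1 : 1 ≤ E := by
    rw [hE]
    have : (0:ℝ) ≤ (K + 1) * (t - p) := mul_nonneg (by linarith) (by linarith)
    calc (1:ℝ) = Real.exp 0 := by simp
    _ ≤ E := Real.exp_le_exp.2 (by simpa using this)
  have hE0 : 0 < E := lt_of_lt_of_le one_pos hE1
  set δ : ℝ := f t / (2 * E) with hδdef
  have hδ : 0 < δ := by positivity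
  have hcw : ContinuousWithinAt f (Set.Icc p q) p := hf p ⟨le_rfl, ht.1.trans ht.2⟩
  rw [Metric.continuousWithinAt_iff] at hcw
  obtain ⟨d, hd0, hdp⟩ := hcw δ hδ
  set p' : ℝ := min (p + d / 2) ((p + t) / 2) with hp'def
  have hpp' : p < p' := by
    apply lt_min <;> linarith
  have hp't : p' < t := by
    have : p' ≤ (p + t) / 2 := min_le_right _ _
    linarith
  have hp'q : p' ≤ q := le_trans hp't.le ht.2
  have hfp' : f p' < δ := by
    have h1 : p' ∈ Set.Icc p q := ⟨hpp'.le, hp'q⟩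
    have h2 : dist p' p < d := by
      rw [Real.dist_eq, abs_of_nonneg (by linarith)]
      have : p' ≤ p + d / 2 := min_le_left _ _
      linarith
    have := hdp h1 h2
    rw [Real.dist_eq] at this
    have := abs_lt.1 this
    linarith
  set B : ℝ → ℝ := fun s => δ * Real.exp ((K + 1) * (s - p)) with hB
  set B' : ℝ → ℝ := fun s => δ * (Real.exp ((K + 1) * (s - p)) * (K + 1)) with hB'
  have hBd : ∀ s, HasDerivAt B (B' s) s := by
    intro s
    have h1 : HasDerivAt (fun s : ℝ => (K + 1) * (s - p)) (K + 1) s := by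
      simpa using ((hasDerivAt_id s).sub_const p).const_mul (K + 1)
    exact h1.exp.const_mul δ
  have key : ∀ ⦃s : ℝ⦄, s ∈ Set.Icc p' t → f s ≤ B s := by
    apply image_le_of_deriv_right_lt_deriv_boundary'
      (hf.mono (Set.Icc_subset_Icc hpp'.le ht.2))
      (fun s hs => hd s ⟨lt_of_lt_of_le hpp' hs.1, lt_of_lt_of_le hs.2 ht.2⟩)
      _ (fun s _ => (hBd s).continuousAt.continuousWithinAt)
      (fun s _ => (hBd s).hasDerivWithinAt)
    · intro s hs heq
      have hs' : s ∈ Set.Ioo p q := ⟨lt_of_lt_of_le hpp' hs.1, lt_of_lt_of_le hs.2 ht.2⟩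
      have hBpos : 0 < B s := by
        have : 0 < Real.exp ((K + 1) * (s - p)) := Real.exp_pos _
        rw [hB]; positivity
      have h0f : 0 ≤ f s := heq ▸ hBpos.le
      have h1 : f' s ≤ K * B s := heq ▸ hbnd s hs' h0f
      have h2 : B' s = (K + 1) * B s := by rw [hB, hB']; ring
      rw [h2]
      nlinarith
    · have hBp' : B p' = δ * Real.exp ((K + 1) * (p' - p)) := rfl
      have h2 : 1 ≤ Real.exp ((K + 1) * (p' - p)) := by
        calc (1:ℝ) = Real.exp 0 := by simp
        _ ≤ _ := Real.exp_le_exp.2 (by nlinarith)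
      nlinarith
  have := key ⟨hp't.le, le_rfl⟩
  have hBt : B t = f t / 2 := by
    rw [hB]
    simp only []
    rw [hδdef, hE]
    field_simp
  rw [hBt] at this
  linarith

/-- Differential inequality allowing a finite set `D` of exceptional points. -/
lemma sirsW {f f' : ℝ → ℝ} {x y K : ℝ} {D : Set ℝ} (hK : 0 ≤ K) (hxy : x ≤ y)
    (hD : D.Finite)
    (hf : ContinuousOn f (Set.Icc x y))
    (hd : ∀ t, t ∈ Set.Ico x y → t ∉ D → HasDerivWithinAt f (f' t) (Set.Ici t) t)
    (hbnd : ∀ t, t ∈ Set.Ico x y → t ∉ D → 0 ≤ f t → f' t ≤ K * f t)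
    (hx : f x ≤ 0) : ∀ t ∈ Set.Icc x y, f t ≤ 0 := by
  set A : Set ℝ := {t | t ∈ Set.Icc x y ∧ ∀ s ∈ Set.Icc x t, f s ≤ 0} with hA
  have hxA : x ∈ A := by
    refine ⟨⟨le_rfl, hxy⟩, fun s hs => ?_⟩
    have : s = x := le_antisymm hs.2 hs.1
    exact this ▸ hx
  have hbdd : BddAbove A := ⟨y, fun t ht => ht.1.2⟩
  set T : ℝ := sSup A with hT
  have hxT : x ≤ T := le_csSup hbdd hxA
  have hTy : T ≤ y := csSup_le ⟨x, hxA⟩ (fun t ht => ht.1.2)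
  have hfT0 : ∀ s, x ≤ s → s < T → f s ≤ 0 := by
    intro s hxs hsT
    obtain ⟨u, huA, hsu⟩ := exists_lt_of_lt_csSup ⟨x, hxA⟩ hsT
    exact huA.2 s ⟨hxs, hsu.le⟩
  have hfT : f T ≤ 0 := by
    rcases eq_or_lt_of_le hxT with h | hxT'
    · exact h ▸ hx
    by_contra hTpos
    push_neg at hTpos
    have hcw : ContinuousWithinAt f (Set.Icc x y) T := hf T ⟨hxT, hTy⟩
    rw [Metric.continuousWithinAt_iff] at hcw
    obtain ⟨d, hd0, hdp⟩ := hcw (f T / 2) (by linarith)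
    set s : ℝ := max x (T - d / 2) with hs
    have hxs : x ≤ s := le_max_left _ _
    have hsT : s < T := by
      apply max_lt hxT'
      linarith
    have hsmem : s ∈ Set.Icc x y := ⟨hxs, hsT.le.trans hTy⟩
    have hdist : dist s T < d := by
      rw [Real.dist_eq, abs_of_nonpos (by linarith)]
      have : T - d / 2 ≤ s := le_max_right _ _
      linarith
    have := hdp hsmem hdist
    rw [Real.dist_eq] at this
    have h2 := abs_lt.1 this
    have := hfT0 s hxs hsT
    linarith
  have hTA : T ∈ A := by
    refine ⟨⟨hxT, hTy⟩, fun s hs => ?_⟩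
    rcases eq_or_lt_of_le hs.2 with h | h
    · exact h ▸ hfT
    · exact hfT0 s hs.1 h
  have hTeqy : T = y := by
    by_contra hne
    have hTy' : T < y := lt_of_le_of_ne hTy hne
    have hfin : (D ∩ Set.Ioc T y).Finite := hD.inter_of_left _
    have step : ∃ q', T < q' ∧ q' ≤ y ∧ Set.Ioo T q' ∩ D = ∅ := by
      rcases (D ∩ Set.Ioc T y).eq_empty_or_nonempty with hemp | hne'
      · refine ⟨y, hTy', le_rfl, ?_⟩
        ext e
        simp only [Set.mem_inter_iff, Set.mem_empty_iff_false, iff_false, not_and, Set.mem_Ioo]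
        intro he heD
        have : e ∈ D ∩ Set.Ioc T y := ⟨heD, he.1, he.2.le⟩
        rw [hemp] at this
        exact this
      · set dmin : ℝ := hfin.toFinset.min' (by rwa [Set.Finite.toFinset_nonempty]) with hdmin
        have hdmem : dmin ∈ D ∩ Set.Ioc T y := by
          have := hfin.toFinset.min'_mem (by rwa [Set.Finite.toFinset_nonempty])
          rwa [Set.Finite.mem_toFinset] at this
        refine ⟨dmin, hdmem.2.1, hdmem.2.2, ?_⟩
        ext e
        simp only [Set.mem_inter_iff, Set.mem_empty_iff_false, iff_false, not_and, Set.mem_Ioo]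
        intro he heD
        have hmem : e ∈ hfin.toFinset := by
          rw [Set.Finite.mem_toFinset]
          exact ⟨heD, he.1, he.2.le.trans hdmem.2.2⟩
        have := hfin.toFinset.min'_le e hmem
        rw [← hdmin] at this
        exact absurd this (not_le.2 he.2)
    obtain ⟨q', hTq', hq'y, hgap⟩ := step
    have hW0 := sirsW0 hK (hf.mono (Set.Icc_subset_Icc hxT hq'y))
      (fun t ht => hd t ⟨hxT.trans ht.1.le, lt_of_lt_of_le ht.2 hq'y⟩
        (fun hmem => by
          have : t ∈ Set.Ioo T q' ∩ D := ⟨ht, hmem⟩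
          rw [hgap] at this; exact this))
      (fun t ht h0 => hbnd t ⟨hxT.trans ht.1.le, lt_of_lt_of_le ht.2 hq'y⟩
        (fun hmem => by
          have : t ∈ Set.Ioo T q' ∩ D := ⟨ht, hmem⟩
          rw [hgap] at this; exact this) h0)
      hfT
    have hq'A : q' ∈ A := by
      refine ⟨⟨hxT.trans hTq'.le, hq'y⟩, fun s hs => ?_⟩
      rcases le_or_gt s T with h | h
      · exact hTA.2 s ⟨hs.1, h⟩
      · exact hW0 s ⟨h.le, hs.2⟩
    have := le_csSup hbdd hq'A
    rw [← hT] at this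
    linarith
  intro t ht
  exact hTA.2 t ⟨ht.1, ht.2.trans_eq hTeqy.symm⟩

/-- Master comparison lemma for SIRS solutions: a linear combination
`α S + β I + g` which pushes down whenever nonnegative stays nonpositive. -/
lemma sirsMaster {N : ℝ} {a b c : Env → ℝ} {ξ : ℝ → Env} {S I : ℝ → ℝ}
    (hξ : IsSwitchingSignal ξ) (hsol : IsSIRSSolution N a b c ξ S I)
    (α β : ℝ) {g g' : ℝ → ℝ} (hgc : Continuous g) (hg : ∀ t, HasDerivAt g (g' t) t)
    {x y K : ℝ} (hx0 : 0 ≤ x) (hxy : x ≤ y) (hK : 0 ≤ K)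
    (hbnd : ∀ t, x ≤ t → t < y → ContPt ξ t →
      0 ≤ α * S t + β * I t + g t →
      α * (-(a (ξ t) * S t * I t) + c (ξ t) * (N - S t - I t))
        + β * (a (ξ t) * S t * I t - b (ξ t) * I t) + g' t
        ≤ K * (α * S t + β * I t + g t))
    (hstart : α * S x + β * I x + g x ≤ 0) :
    ∀ t, x ≤ t → t ≤ y → α * S t + β * I t + g t ≤ 0 := by
  have hIcc : Set.Icc x y ⊆ Set.Ici (0:ℝ) := fun s hs => Set.mem_Ici.2 (hx0.trans hs.1)
  intro t hxt hty
  have hmain := sirsW (f := fun t => α * S t + β * I t + g t)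
    (f' := fun t => α * (-(a (ξ t) * S t * I t) + c (ξ t) * (N - S t - I t))
        + β * (a (ξ t) * S t * I t - b (ξ t) * I t) + g' t)
    (D := {t : ℝ | 0 ≤ t ∧ t ≤ y ∧ ¬ ContPt ξ t}) hK hxy (hξ.2 y)
    (((continuousOn_const.mul (hsol.1.mono hIcc)).add
      (continuousOn_const.mul (hsol.2.1.mono hIcc))).add hgc.continuousOn)
    (fun s hs hsD => by
      have hs0 : 0 ≤ s := hx0.trans hs.1
      have hcont : ContPt ξ s := by
        by_contra hnc
        exact hsD ⟨hs0, hs.2.le, hnc⟩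
      obtain ⟨hS, hI⟩ := hsol.2.2 s hs0 hcont
      have hsub : Set.Ici s ⊆ Set.Ici (0:ℝ) := Set.Ici_subset_Ici.2 hs0
      exact ((hS.mono hsub).const_mul α |>.add ((hI.mono hsub).const_mul β)).add
        (hg s).hasDerivWithinAt)
    (fun s hs hsD h0 => by
      have hs0 : 0 ≤ s := hx0.trans hs.1
      have hcont : ContPt ξ s := by
        by_contra hnc
        exact hsD ⟨hs0, hs.2.le, hnc⟩
      exact hbnd s hs.1 hs.2 hcont h0)
    hstart
  exact hmain t ⟨hxt, hty⟩

set_option maxHeartbeats 2000000 in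
theorem sirs_quadrangle_invariant_and_absorbing
    (N : ℝ) (hN : 0 < N) (a b c : Env → ℝ)
    (ha : ∀ σ, 0 < a σ) (hb : ∀ σ, 0 < b σ) (hc : ∀ σ, 0 < c σ)
    (horder : b true / a true ≤ b false / a false)
    (hsup : b true / a true < N)
    (Smin : ℝ) (hSmin0 : 0 < Smin) (hSmin1 : Smin < b true / (2 * a true))
    (hSmin2 : ∀ σ, 0 < -(N * a σ * Smin) + c σ * (b true / (2 * a true) - Smin))
    (Q : Set (ℝ × ℝ))
    (hQ : Q = {p : ℝ × ℝ | Smin ≤ p.1 ∧ 0 ≤ p.2 ∧ p.1 + p.2 ≤ N ∧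
      p.2 ≤ N - b true / (2 * a true)}) :
    (∀ (ξ : ℝ → Env), IsSwitchingSignal ξ →
      ∀ (S I : ℝ → ℝ), IsSIRSSolution N a b c ξ S I →
      ∀ t₀ : ℝ, 0 ≤ t₀ → (S t₀, I t₀) ∈ Q →
      ∀ t : ℝ, t₀ ≤ t → (S t, I t) ∈ Q) ∧
    (∀ (ξ : ℝ → Env), IsSwitchingSignal ξ →
      ∀ (S I : ℝ → ℝ), IsSIRSSolution N a b c ξ S I →
      0 < S 0 → 0 < I 0 → S 0 + I 0 ≤ N →
      ∃ T : ℝ, 0 ≤ T ∧ ∀ t : ℝ, T ≤ t → (S t, I t) ∈ Q) := by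
  have haT := ha true; have haF := ha false
  have hbT := hb true; have hbF := hb false
  set θ : ℝ := b true / (2 * a true) with hθdef
  have hθpos : 0 < θ := by rw [hθdef]; positivity
  have hθlt : θ < b true / a true := by
    rw [hθdef, div_lt_div_iff₀ (by linarith) (by linarith)]
    nlinarith
  have hθN : θ < N := hθlt.trans hsup
  set M : ℝ := N - θ with hMdef
  have hM0 : 0 < M := by rw [hMdef]; linarith
  have hMN : M ≤ N := by rw [hMdef]; linarith
  have hθσ : ∀ σ, a σ * θ < b σ := by
    intro σ
    have key : a σ * θ * (2 * a true) = a σ * b true := by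
      rw [hθdef]; field_simp
    cases σ
    · have horder' : b true * a false ≤ b false * a true := by
        rw [div_le_div_iff₀ haT haF] at horder; exact horder
      nlinarith [mul_pos hbF haT]
    · nlinarith [mul_pos hbT haT]
  set ρ : ℝ := min (b true - a true * θ) (b false - a false * θ) with hρdef
  have hρ0 : 0 < ρ := lt_min (by nlinarith [hθσ true]) (by nlinarith [hθσ false])
  have hρσ : ∀ σ, a σ * θ ≤ b σ - ρ := by
    intro σ; cases σ
    · have := min_le_right (b true - a true * θ) (b false - a false * θ); rw [← hρdef] at this; linarith
    · have := min_le_left (b true - a true * θ) (b false - a false * θ); rw [← hρdef] at this; linarith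
  set δ0 : ℝ := min (-(N * a true * Smin) + c true * (θ - Smin))
      (-(N * a false * Smin) + c false * (θ - Smin)) with hδ0def
  have hδ00 : 0 < δ0 := lt_min (hSmin2 true) (hSmin2 false)
  have hδ0σ : ∀ σ, δ0 ≤ -(N * a σ * Smin) + c σ * (θ - Smin) := by
    intro σ; cases σ
    · exact min_le_right _ _
    · exact min_le_left _ _
  set Ka : ℝ := max (a true) (a false) with hKadef
  have hKa0 : 0 < Ka := lt_of_lt_of_le haT (le_max_left _ _)
  have haK : ∀ σ, a σ ≤ Ka := by intro σ; cases σ; exacts [le_max_right _ _, le_max_left _ _]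
  set Kb : ℝ := max (b true) (b false) with hKbdef
  have hKb0 : 0 < Kb := lt_of_lt_of_le hbT (le_max_left _ _)
  have hbK : ∀ σ, b σ ≤ Kb := by intro σ; cases σ; exacts [le_max_right _ _, le_max_left _ _]
  -- P1 : nonnegativity of I propagates
  have P1 : ∀ (ξ : ℝ → Env), IsSwitchingSignal ξ → ∀ (S I : ℝ → ℝ),
      IsSIRSSolution N a b c ξ S I → ∀ x t : ℝ, 0 ≤ x → x ≤ t → 0 ≤ I x → 0 ≤ I t := by
    intro ξ hξ S I hsol x t hx0 hxt hIx
    have h0t : (0:ℝ) ≤ t := hx0.trans hxt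
    obtain ⟨R, hR⟩ := (isCompact_Icc (a := (0:ℝ)) (b := t)).exists_bound_of_continuousOn
      (hsol.1.mono Set.Icc_subset_Ici_self)
    have hR0 : 0 ≤ R := le_trans (norm_nonneg _) (hR 0 ⟨le_rfl, h0t⟩)
    have hKnn : (0:ℝ) ≤ Ka * R + Kb := by positivity
    have key := sirsMaster hξ hsol 0 (-1) (g := fun _ => (0:ℝ)) (g' := fun _ => (0:ℝ))
      continuous_const (fun u => hasDerivAt_const u (0:ℝ)) hx0 hxt hKnn
      (fun u hu1 hu2 hcp h0 => by
        have hSu : |S u| ≤ R := by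
          have := hR u ⟨hx0.trans hu1, hu2.le⟩
          rwa [Real.norm_eq_abs] at this
        obtain ⟨hSu1, hSu2⟩ := abs_le.1 hSu
        simp only [zero_mul, neg_mul, one_mul, zero_add, add_zero] at h0 ⊢
        have hI : I u ≤ 0 := by linarith
        have hfac : 0 ≤ (Ka * R + Kb) - a (ξ u) * S u + b (ξ u) := by
          nlinarith [haK (ξ u), ha (ξ u), hb (ξ u), hbK (ξ u)]
        nlinarith [mul_nonneg (neg_nonneg.2 hI) hfac])
      (by simp only [zero_mul, neg_mul, one_mul, zero_add, add_zero]; linarith)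
    have := key t hxt le_rfl
    simp only [zero_mul, neg_mul, one_mul, zero_add, add_zero] at this
    linarith
  -- P2 : S + I ≤ N propagates
  have P2 : ∀ (ξ : ℝ → Env), IsSwitchingSignal ξ → ∀ (S I : ℝ → ℝ),
      IsSIRSSolution N a b c ξ S I → ∀ x t : ℝ, 0 ≤ x → x ≤ t → 0 ≤ I x →
      S x + I x ≤ N → S t + I t ≤ N := by
    intro ξ hξ S I hsol x t hx0 hxt hIx hSIx
    have key := sirsMaster hξ hsol 1 1 (g := fun _ => -N) (g' := fun _ => (0:ℝ))
      continuous_const (fun u => hasDerivAt_const u (-N)) hx0 hxt zero_le_one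
      (fun u hu1 hu2 hcp h0 => by
        have hIu : 0 ≤ I u := P1 ξ hξ S I hsol x u hx0 hu1 hIx
        simp only [one_mul, add_zero] at h0 ⊢
        nlinarith [mul_nonneg (hc (ξ u)).le (by linarith : (0:ℝ) ≤ S u + I u - N),
          mul_nonneg (hb (ξ u)).le hIu])
      (by simp only [one_mul]; linarith)
    have := key t hxt le_rfl
    simp only [one_mul] at this
    linarith
  -- P3 : I ≤ M propagates
  have P3 : ∀ (ξ : ℝ → Env), IsSwitchingSignal ξ → ∀ (S I : ℝ → ℝ),
      IsSIRSSolution N a b c ξ S I → ∀ x t : ℝ, 0 ≤ x → x ≤ t → 0 ≤ I x →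
      S x + I x ≤ N → I x ≤ M → I t ≤ M := by
    intro ξ hξ S I hsol x t hx0 hxt hIx hSIx hIMx
    have key := sirsMaster hξ hsol 0 1 (g := fun _ => -M) (g' := fun _ => (0:ℝ))
      continuous_const (fun u => hasDerivAt_const u (-M)) hx0 hxt zero_le_one
      (fun u hu1 hu2 hcp h0 => by
        have hSINu : S u + I u ≤ N := P2 ξ hξ S I hsol x u hx0 hu1 hIx hSIx
        simp only [zero_mul, one_mul, zero_add] at h0 ⊢
        have hIpos : 0 < I u := by linarith
        have hSθ : S u ≤ θ := by linarith [hMdef]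
        have hfac : 0 ≤ b (ξ u) - a (ξ u) * S u := by
          nlinarith [hθσ (ξ u), mul_le_mul_of_nonneg_left hSθ (ha (ξ u)).le]
        nlinarith [mul_nonneg hIpos.le hfac])
      (by simp only [zero_mul, one_mul, zero_add]; linarith)
    have := key t hxt le_rfl
    simp only [zero_mul, one_mul, zero_add] at this
    linarith
  -- P4 : Smin ≤ S propagates
  have P4 : ∀ (ξ : ℝ → Env), IsSwitchingSignal ξ → ∀ (S I : ℝ → ℝ),
      IsSIRSSolution N a b c ξ S I → ∀ x t : ℝ, 0 ≤ x → x ≤ t → Smin ≤ S x →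
      0 ≤ I x → S x + I x ≤ N → I x ≤ M → Smin ≤ S t := by
    intro ξ hξ S I hsol x t hx0 hxt hSx hIx hSIx hIMx
    have key := sirsMaster hξ hsol (-1) 0 (g := fun _ => Smin) (g' := fun _ => (0:ℝ))
      continuous_const (fun u => hasDerivAt_const u Smin) hx0 hxt zero_le_one
      (fun u hu1 hu2 hcp h0 => by
        have hIu : 0 ≤ I u := P1 ξ hξ S I hsol x u hx0 hu1 hIx
        have hSINu : S u + I u ≤ N := P2 ξ hξ S I hsol x u hx0 hu1 hIx hSIx
        have hIMu : I u ≤ M := P3 ξ hξ S I hsol x u hx0 hu1 hIx hSIx hIMx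
        simp only [neg_mul, one_mul, zero_mul, add_zero, neg_neg] at h0 ⊢
        have hSle : S u ≤ Smin := by linarith
        have hprod : S u * I u ≤ Smin * M := by
          nlinarith [mul_le_mul_of_nonneg_right hSle hIu,
            mul_le_mul_of_nonneg_left hIMu hSmin0.le]
        have h5 : a (ξ u) * (S u * I u) ≤ a (ξ u) * (Smin * M) :=
          mul_le_mul_of_nonneg_left hprod (ha (ξ u)).le
        have h6 : a (ξ u) * (Smin * M) ≤ a (ξ u) * (Smin * N) :=
          mul_le_mul_of_nonneg_left (mul_le_mul_of_nonneg_left hMN hSmin0.le) (ha (ξ u)).le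
        have h8 : c (ξ u) * (θ - Smin) ≤ c (ξ u) * (N - S u - I u) :=
          mul_le_mul_of_nonneg_left (by linarith [hMdef]) (hc (ξ u)).le
        nlinarith [hSmin2 (ξ u), h5, h6, h8])
      (by simp only [neg_mul, one_mul, zero_mul, add_zero]; linarith)
    have := key t hxt le_rfl
    simp only [neg_mul, one_mul, zero_mul, add_zero] at this
    linarith
  -- P6 : positivity of S
  have P6 : ∀ (ξ : ℝ → Env), IsSwitchingSignal ξ → ∀ (S I : ℝ → ℝ),
      IsSIRSSolution N a b c ξ S I → 0 < S 0 → 0 ≤ I 0 → S 0 + I 0 ≤ N →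
      ∀ t : ℝ, 0 ≤ t → 0 < S t := by
    intro ξ hξ S I hsol hS0 hI00 hSIN0 t ht
    have hKnn : (0:ℝ) ≤ Ka * N := by positivity
    have key := sirsMaster hξ hsol (-1) 0
      (g := fun u => S 0 * Real.exp (-(Ka * N * u)))
      (g' := fun u => S 0 * (Real.exp (-(Ka * N * u)) * -(Ka * N)))
      (continuous_const.mul (Real.continuous_exp.comp
        ((continuous_const.mul continuous_id).neg)))
      (fun u => by
        have h1 : HasDerivAt (fun w : ℝ => -(Ka * N * w)) (-(Ka * N)) u := by
          simpa [Pi.neg_def] using ((hasDerivAt_id u).const_mul (Ka * N)).neg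
        exact h1.exp.const_mul (S 0))
      le_rfl ht hKnn
      (fun u hu1 hu2 hcp h0 => by
        have hIu : 0 ≤ I u := P1 ξ hξ S I hsol 0 u le_rfl hu1 hI00
        have hSINu : S u + I u ≤ N := P2 ξ hξ S I hsol 0 u le_rfl hu1 hI00 hSIN0
        have hE : 0 < Real.exp (-(Ka * N * u)) := Real.exp_pos _
        simp only [neg_mul, one_mul, zero_mul, add_zero, zero_add, neg_neg] at h0 ⊢
        rcases le_or_gt 0 (S u) with hS | hS
        · have hIN : I u ≤ N := by linarith
          have h1 : a (ξ u) * S u * I u ≤ a (ξ u) * S u * N :=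
            mul_le_mul_of_nonneg_left hIN (mul_nonneg (ha (ξ u)).le hS)
          nlinarith [h1, mul_le_mul_of_nonneg_right (haK (ξ u)) (mul_nonneg hS hN.le),
            mul_nonneg (hc (ξ u)).le (by linarith : (0:ℝ) ≤ N - S u - I u),
            mul_nonneg hKnn
              (by linarith : (0:ℝ) ≤ S 0 * Real.exp (-(Ka * N * u)) - S u)]
        · have h1a : a (ξ u) * S u ≤ 0 := by nlinarith [ha (ξ u)]
          have h1 : a (ξ u) * S u * I u ≤ 0 := by nlinarith [mul_nonneg (neg_nonneg.2 h1a) hIu]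
          nlinarith [h1,
            mul_nonneg (hc (ξ u)).le (by linarith : (0:ℝ) ≤ N - S u - I u),
            mul_nonneg hKnn (by linarith : (0:ℝ) ≤ - S u),
            mul_nonneg hKnn (mul_pos hS0 hE).le])
      (by simp)
    have := key t ht le_rfl
    simp only [neg_mul, one_mul, zero_mul, add_zero, zero_add] at this
    nlinarith [mul_pos hS0 (Real.exp_pos (-(Ka * N * t)))]
  -- Part (i)
  have parti : ∀ (ξ : ℝ → Env), IsSwitchingSignal ξ →
      ∀ (S I : ℝ → ℝ), IsSIRSSolution N a b c ξ S I →
      ∀ t₀ : ℝ, 0 ≤ t₀ → (S t₀, I t₀) ∈ Q →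
      ∀ t : ℝ, t₀ ≤ t → (S t, I t) ∈ Q := by
    intro ξ hξ S I hsol t₀ ht₀ hmem t htt
    rw [hQ] at hmem ⊢
    simp only [Set.mem_setOf_eq] at hmem ⊢
    obtain ⟨m1, m2, m3, m4⟩ := hmem
    exact ⟨P4 ξ hξ S I hsol t₀ t ht₀ htt m1 m2 m3 m4,
      P1 ξ hξ S I hsol t₀ t ht₀ htt m2,
      P2 ξ hξ S I hsol t₀ t ht₀ htt m2 m3,
      P3 ξ hξ S I hsol t₀ t ht₀ htt m2 m3 m4⟩
  refine ⟨parti, ?_⟩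
  -- Part (ii)
  intro ξ hξ S I hsol hS0 hI0 hSIN0
  have gI0 : ∀ s : ℝ, 0 ≤ s → 0 ≤ I s := fun s hs => P1 ξ hξ S I hsol 0 s le_rfl hs hI0.le
  have gSIN : ∀ s : ℝ, 0 ≤ s → S s + I s ≤ N :=
    fun s hs => P2 ξ hξ S I hsol 0 s le_rfl hs hI0.le hSIN0
  have gSpos : ∀ s : ℝ, 0 ≤ s → 0 < S s := P6 ξ hξ S I hsol hS0 hI0.le hSIN0
  -- Step A : find T₁ with I T₁ ≤ M
  set y₁ : ℝ := max 0 (Real.log (I 0 / M) / ρ + 1) with hy₁def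
  have hy₁0 : (0:ℝ) ≤ y₁ := le_max_left _ _
  have hdecay : I 0 * Real.exp (-(ρ * y₁)) < M := by
    have h1 : Real.log (I 0 / M) / ρ + 1 ≤ y₁ := le_max_right _ _
    have h2 : Real.log (I 0 / M) < ρ * y₁ := by
      nlinarith [(div_le_iff₀ hρ0).1 (by linarith : Real.log (I 0 / M) / ρ ≤ y₁ - 1)]
    have h3 : Real.exp (-(ρ * y₁)) < M / I 0 := by
      rw [show M / I 0 = Real.exp (Real.log (M / I 0)) from
        (Real.exp_log (by positivity)).symm]
      apply Real.exp_lt_exp.2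
      have hlog : Real.log (M / I 0) = - Real.log (I 0 / M) := by
        rw [← Real.log_inv]
        congr 1
        field_simp
      rw [hlog]; linarith
    calc I 0 * Real.exp (-(ρ * y₁)) < I 0 * (M / I 0) := by
          exact mul_lt_mul_of_pos_left h3 hI0
    _ = M := by field_simp
  have hT₁ : ∃ T₁ : ℝ, 0 ≤ T₁ ∧ T₁ ≤ y₁ ∧ I T₁ ≤ M := by
    by_contra hcon
    push_neg at hcon
    have key := sirsMaster hξ hsol 0 1
      (g := fun u => -(I 0 * Real.exp (-(ρ * u))))
      (g' := fun u => -(I 0 * (Real.exp (-(ρ * u)) * -ρ)))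
      ((continuous_const.mul (Real.continuous_exp.comp
        ((continuous_const.mul continuous_id).neg))).neg)
      (fun u => by
        have h1 : HasDerivAt (fun w : ℝ => -(ρ * w)) (-ρ) u := by
          simpa [Pi.neg_def] using ((hasDerivAt_id u).const_mul ρ).neg
        exact (h1.exp.const_mul (I 0)).neg)
      le_rfl hy₁0 zero_le_one
      (fun u hu1 hu2 hcp h0 => by
        have hMI : M < I u := hcon u hu1 hu2.le
        have hSINu : S u + I u ≤ N := gSIN u hu1
        have hSθ : S u ≤ θ := by linarith [hMdef]
        have hIpos : 0 < I u := hM0.trans hMI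
        have h1 : a (ξ u) * S u ≤ a (ξ u) * θ := mul_le_mul_of_nonneg_left hSθ (ha (ξ u)).le
        have h2 := hρσ (ξ u)
        simp only [zero_mul, one_mul, zero_add, neg_neg] at h0 ⊢
        have h3 : I u * (a (ξ u) * S u - b (ξ u)) ≤ I u * (-ρ) :=
          mul_le_mul_of_nonneg_left (by linarith) hIpos.le
        have h4 : 0 ≤ I u - I 0 * Real.exp (-(ρ * u)) := by linarith
        nlinarith [h3, mul_nonneg hρ0.le h4])
      (by simp)
    have := key y₁ hy₁0 le_rfl
    simp only [zero_mul, one_mul, zero_add] at this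
    have := hcon y₁ hy₁0 le_rfl
    linarith
  obtain ⟨T₁, hT₁0, hT₁y, hIT₁⟩ := hT₁
  have gIM : ∀ s : ℝ, T₁ ≤ s → I s ≤ M :=
    fun s hs => P3 ξ hξ S I hsol T₁ s hT₁0 hs (gI0 T₁ hT₁0) (gSIN T₁ hT₁0) hIT₁
  -- Step B : find T₂ ≥ T₁ with Smin ≤ S T₂
  set L : ℝ := Smin / δ0 with hLdef
  have hL0 : 0 < L := by positivity
  have hT₂ : ∃ T₂ : ℝ, T₁ ≤ T₂ ∧ T₂ ≤ T₁ + L ∧ Smin ≤ S T₂ := by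
    by_contra hcon2
    push_neg at hcon2
    have key := sirsMaster (y := T₁ + L) hξ hsol (-1) 0
      (g := fun u => S T₁ + δ0 * (u - T₁)) (g' := fun _ => δ0)
      (continuous_const.add (continuous_const.mul (continuous_id.sub continuous_const)))
      (fun u => by
        simpa using (((hasDerivAt_id u).sub_const T₁).const_mul δ0).const_add (S T₁))
      hT₁0 (by linarith) zero_le_one
      (fun u hu1 hu2 hcp h0 => by
        have hSu : S u < Smin := hcon2 u hu1 hu2.le
        have hIu : 0 ≤ I u := gI0 u (hT₁0.trans hu1)
        have hIMu : I u ≤ M := gIM u hu1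
        have hSINu : S u + I u ≤ N := gSIN u (hT₁0.trans hu1)
        simp only [neg_mul, one_mul, zero_mul, add_zero, zero_add, neg_neg] at h0 ⊢
        have hprod : S u * I u ≤ Smin * M := by
          nlinarith [mul_le_mul_of_nonneg_right hSu.le hIu,
            mul_le_mul_of_nonneg_left hIMu hSmin0.le]
        have h5 : a (ξ u) * (S u * I u) ≤ a (ξ u) * (Smin * M) :=
          mul_le_mul_of_nonneg_left hprod (ha (ξ u)).le
        have h6 : a (ξ u) * (Smin * M) ≤ a (ξ u) * (Smin * N) :=
          mul_le_mul_of_nonneg_left (mul_le_mul_of_nonneg_left hMN hSmin0.le) (ha (ξ u)).le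
        have h8 : c (ξ u) * (θ - Smin) ≤ c (ξ u) * (N - S u - I u) :=
          mul_le_mul_of_nonneg_left (by linarith [hMdef]) (hc (ξ u)).le
        nlinarith [hδ0σ (ξ u), h5, h6, h8])
      (by simp)
    have hfin := key (T₁ + L) (by linarith) le_rfl
    simp only [neg_mul, one_mul, zero_mul, add_zero, zero_add] at hfin
    have hδL : δ0 * (T₁ + L - T₁) = Smin := by
      rw [hLdef]; field_simp; ring
    have hSpos := gSpos T₁ hT₁0
    have := hcon2 (T₁ + L) (by linarith) le_rfl
    linarith
  obtain ⟨T₂, hT₂1, hT₂2, hST₂⟩ := hT₂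
  have hT₂0 : (0:ℝ) ≤ T₂ := hT₁0.trans hT₂1
  refine ⟨T₂, hT₂0, fun t ht => ?_⟩
  apply parti ξ hξ S I hsol T₂ hT₂0 _ t ht
  rw [hQ]
  simp only [Set.mem_setOf_eq]
  exact ⟨hST₂, gI0 T₂ hT₂0, gSIN T₂ hT₂0, gIM T₂ hT₂1⟩
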